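/- Let m ≥ 0, μ ≥ 0, T₀ ≥ 2 and suppose U : [T₀, ∞) → ℝ is differentiable with U(T₀) ≥ 0 and satisfies, for some constant c > 0 and Γ(t) continuous with Γ(t) ≤ 2t^m + μ/t for all t, the inequality U'(t) + Γ(t) U(t) ≥ c t^m for t ≥ T₀. If moreover Γ(t) ≥ (3/2) t^m for t ≥ T₀, then there exists a constant c' > 0 (depending on m, μ, c, T₀) such that U(t) ≥ c' for all t ≥ 2T₀. -/

import Mathlib

theorem stmt14 (m μ T₀ c : ℝ) (hm : 0 ≤ m) (hμ : 0 ≤ μ) (hT₀ : 2 ≤ T₀) (hc : 0 < c)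
    (U Γ : ℝ → ℝ)
    (hU : ∀ t ∈ Set.Ici T₀, DifferentiableAt ℝ U t)
    (hU0 : 0 ≤ U T₀)
    (hΓc : ContinuousOn Γ (Set.Ici T₀))
    (hΓub : ∀ t ≥ T₀, Γ t ≤ 2 * t ^ m + μ / t)
    (hΓlb : ∀ t ≥ T₀, (3/2) * t ^ m ≤ Γ t)
    (hineq : ∀ t ≥ T₀, c * t ^ m ≤ deriv U t + Γ t * U t) :
    ∃ c' > (0:ℝ), ∀ t ≥ 2 * T₀, c' ≤ U t := by
  set K : ℝ := 2 + μ / 2 with hK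
  have hKpos : 0 < K := by positivity
  set L : ℝ := c / (2 * K) with hL
  have hLpos : 0 < L := by positivity
  have hLc : L ≤ c / 4 := by
    have h4 : (4:ℝ) ≤ 2 * K := by rw [hK]; linarith
    exact div_le_div_of_nonneg_left hc.le (by norm_num) h4
  -- pointwise derivative bound where U ≤ L
  have hderiv : ∀ r, T₀ ≤ r → U r ≤ L → c / 2 ≤ deriv U r := by
    intro r hr hUr
    have hr0 : (0:ℝ) < r := by linarith
    have hrm : (1:ℝ) ≤ r ^ m := Real.one_le_rpow (by linarith) hm
    have h1 := hineq r hr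
    have hΓpos : 0 < Γ r := lt_of_lt_of_le (by nlinarith) (hΓlb r hr)
    have hΓU : Γ r * U r ≤ (c / 2) * r ^ m := by
      rcases le_or_gt (U r) 0 with h | h
      · have : Γ r * U r ≤ 0 := mul_nonpos_of_nonneg_of_nonpos hΓpos.le h
        nlinarith
      · have h2 : Γ r * U r ≤ (2 * r ^ m + μ / r) * U r := by
          apply mul_le_mul_of_nonneg_right (hΓub r hr) h.le
        have h3 : μ / r ≤ (μ / 2) * r ^ m := by
          have : μ / r ≤ μ / 2 := div_le_div_of_nonneg_left hμ (by norm_num) (by linarith)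
          nlinarith
        have h4 : (2 * r ^ m + μ / r) * U r ≤ K * r ^ m * U r := by
          apply mul_le_mul_of_nonneg_right _ h.le
          nlinarith
        have h5 : K * r ^ m * U r ≤ K * r ^ m * L := by
          apply mul_le_mul_of_nonneg_left hUr
          nlinarith
        have h6 : K * L = c / 2 := by
          field_simp [hL]
          rw [hL]; field_simp [hKpos.ne']
        have h7 : K * r ^ m * L = c / 2 * r ^ m := by linear_combination r ^ m * h6
        exact le_trans h2 (le_trans h4 (le_trans h5 h7.le))
    nlinarith
  -- monotonicity helper
  have key : ∀ a b, T₀ ≤ a → a ≤ b → (∀ r ∈ Set.Ioo a b, U r ≤ L) →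
      U a + c / 2 * (b - a) ≤ U b := by
    intro a b ha hab hsmall
    set g : ℝ → ℝ := fun r => U r - c / 2 * r with hg
    have hgd : ∀ x ∈ Set.Ici T₀, HasDerivAt g (deriv U x - c / 2) x := by
      intro x hx
      exact ((hU x hx).hasDerivAt).sub (by simpa using (hasDerivAt_id x).const_mul (c / 2))
    have hmono : MonotoneOn g (Set.Icc a b) := by
      apply monotoneOn_of_deriv_nonneg (convex_Icc a b)
      · intro x hx
        exact ((hU x (le_trans ha hx.1)).continuousAt.sub
          (by fun_prop)).continuousWithinAt
      · intro x hx
        rw [interior_Icc] at hx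
        exact ((hgd x (le_trans ha hx.1.le)).differentiableAt).differentiableWithinAt
      · intro x hx
        rw [interior_Icc] at hx
        have hx' : T₀ ≤ x := le_trans ha hx.1.le
        rw [(hgd x hx').deriv]
        have := hderiv x hx' (hsmall x hx)
        linarith
    have := hmono (Set.left_mem_Icc.2 hab) (Set.right_mem_Icc.2 hab) hab
    simp only [hg] at this
    linarith
  refine ⟨L, hLpos, fun t ht => ?_⟩
  have hT₀t : T₀ ≤ t := by linarith
  by_contra hUt
  push_neg at hUt
  set S : Set ℝ := {r ∈ Set.Icc T₀ t | L ≤ U r} with hS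
  have hScl : IsClosed S := by
    have hcont : ContinuousOn U (Set.Icc T₀ t) := fun x hx =>
      (hU x hx.1).continuousAt.continuousWithinAt
    exact hcont.preimage_isClosed_of_isClosed isClosed_Icc isClosed_Ici
  rcases Set.eq_empty_or_nonempty S with hSe | hSne
  · have hsmall : ∀ r ∈ Set.Ioo T₀ t, U r ≤ L := by
      intro r hr
      by_contra h
      push_neg at h
      have : r ∈ S := ⟨⟨hr.1.le, hr.2.le⟩, h.le⟩
      rw [hSe] at this
      exact this
    have := key T₀ t le_rfl hT₀t hsmall
    nlinarith
  · have hbdd : BddAbove S := ⟨t, fun r hr => hr.1.2⟩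
    set s := sSup S with hs
    have hsS : s ∈ S := hScl.csSup_mem hSne hbdd
    have hsmall : ∀ r ∈ Set.Ioo s t, U r ≤ L := by
      intro r hr
      by_contra h
      push_neg at h
      have : r ∈ S := ⟨⟨le_trans hsS.1.1 hr.1.le, hr.2.le⟩, h.le⟩
      exact absurd (le_csSup hbdd this) (not_le.2 hr.1)
    have := key s t hsS.1.1 hsS.1.2 hsmall
    have hLs : L ≤ U s := hsS.2
    nlinarith [hsS.1.2]
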